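/- For every m ≥ 1 and every Borel measurable function f : (2^ω)^m → 2^ω there exists a nonempty perfect set P ⊆ 2^ω that is free for f. -/

import Mathlib

open Set Topology Filter

namespace FreeSetProof

abbrev X := ℕ → Bool

/-! ### Cylinders -/

/-- The cylinder determined by a finite string. -/
def cyl (u : List Bool) : Set X := {x | ∀ i, (h : i < u.length) → x i = u[i]}

lemma cyl_anti {u v : List Bool} (h : u <+: v) : cyl v ⊆ cyl u := by
  intro x hx i hi
  rw [h.getElem hi]
  exact hx i (lt_of_lt_of_le hi h.length_le)

lemma isOpen_cyl (u : List Bool) : IsOpen (cyl u) := by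
  have : cyl u = ⋂ i : Fin u.length, (fun x : X => x i) ⁻¹' {u[(i : ℕ)]} := by
    ext x
    simp only [cyl, mem_setOf_eq, mem_iInter, mem_preimage, mem_singleton_iff]
    exact ⟨fun h i => h i i.2, fun h i hi => h ⟨i, hi⟩⟩
  rw [this]
  exact isOpen_iInter_of_finite fun i =>
    (continuous_apply (i : ℕ)).isOpen_preimage _ (isOpen_discrete _)

lemma isClosed_cyl (u : List Bool) : IsClosed (cyl u) := by
  have : cyl u = ⋂ i : Fin u.length, (fun x : X => x i) ⁻¹' {u[(i : ℕ)]} := by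
    ext x
    simp only [cyl, mem_setOf_eq, mem_iInter, mem_preimage, mem_singleton_iff]
    exact ⟨fun h i => h i i.2, fun h i hi => h ⟨i, hi⟩⟩
  rw [this]
  exact isClosed_iInter fun i =>
    IsClosed.preimage (continuous_apply (i : ℕ)) (isClosed_discrete _)

lemma cyl_nonempty (u : List Bool) : (cyl u).Nonempty := by
  refine ⟨fun i => u.getD i false, fun i hi => ?_⟩
  simp [List.getD_eq_getElem?_getD, List.getElem?_eq_getElem hi]

/-- The length-`N` initial segment of `x` as a string. -/
def str (x : X) (N : ℕ) : List Bool := List.ofFn fun i : Fin N => x i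

@[simp] lemma length_str (x : X) (N : ℕ) : (str x N).length = N := by simp [str]

lemma getElem_str (x : X) (N : ℕ) {i : ℕ} (h : i < (str x N).length) : (str x N)[i] = x i := by
  simp [str]

lemma mem_cyl_str (x : X) (N : ℕ) : x ∈ cyl (str x N) := by
  intro i hi; rw [getElem_str]

lemma eq_of_mem_cyl_str {x y : X} {N : ℕ} (h : y ∈ cyl (str x N)) {i : ℕ} (hi : i < N) :
    y i = x i := by
  have := h i (by simpa using hi)
  rwa [getElem_str] at this

lemma prefix_str {u : List Bool} {x : X} (hx : x ∈ cyl u) {N : ℕ} (hN : u.length ≤ N) :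
    u <+: str x N := by
  rw [List.prefix_iff_eq_take]
  apply List.ext_getElem (by simp [hN])
  intro i h1 h2
  rw [List.getElem_take]
  rw [getElem_str]
  exact (hx i h1).symm

/-- Uniform cylinder neighborhoods form a basis in `X`. -/
lemma exists_str_subset {s : Set X} (hs : IsOpen s) {x : X} (hx : x ∈ s) :
    ∃ N, cyl (str x N) ⊆ s := by
  have h := hs.mem_nhds hx
  rw [nhds_pi, Filter.mem_pi'] at h
  obtain ⟨I, t, ht, hsub⟩ := h
  refine ⟨I.sup id + 1, fun y hy => hsub fun i hi => ?_⟩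
  have : y i = x i := eq_of_mem_cyl_str hy (Nat.lt_succ_of_le (Finset.le_sup (f := id) hi))
  rw [this]
  exact mem_of_mem_nhds (ht i)

/-! ### Boxes -/

variable {m : ℕ}

/-- A box: a product of cylinders. -/
def box (B : Fin m → List Bool) : Set (Fin m → X) := {z | ∀ i, z i ∈ cyl (B i)}

lemma isOpen_box (B : Fin m → List Bool) : IsOpen (box B) := by
  have : box B = ⋂ i, (fun z : Fin m → X => z i) ⁻¹' cyl (B i) := by
    ext z; simp [box]
  rw [this]
  exact isOpen_iInter_of_finite fun i =>
    (continuous_apply i).isOpen_preimage _ (isOpen_cyl _)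

lemma box_nonempty (B : Fin m → List Bool) : (box B).Nonempty := by
  choose g hg using fun i => cyl_nonempty (B i)
  exact ⟨g, hg⟩

lemma box_anti {B B' : Fin m → List Bool} (h : ∀ i, B i <+: B' i) : box B' ⊆ box B :=
  fun z hz i => cyl_anti (h i) (hz i)

lemma mem_box_str (z : Fin m → X) (N : ℕ) : z ∈ box (fun i => str (z i) N) :=
  fun i => mem_cyl_str (z i) N

/-- Uniform boxes form a neighborhood basis in the product. -/
lemma exists_box_str_subset {s : Set (Fin m → X)} (hs : IsOpen s) {z : Fin m → X}
    (hz : z ∈ s) : ∃ N, box (fun i => str (z i) N) ⊆ s := by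
  have h := hs.mem_nhds hz
  rw [nhds_pi, Filter.mem_pi'] at h
  obtain ⟨I, t, ht, hsub⟩ := h
  choose N hN using fun i => exists_str_subset (isOpen_interior (s := t i))
      (mem_interior_iff_mem_nhds.2 (ht i))
  refine ⟨Finset.univ.sup N, fun y hy => hsub fun i _ => ?_⟩
  refine interior_subset (hN i ?_)
  intro j hj
  have hj' : j < Finset.univ.sup N := lt_of_lt_of_le (by simpa using hj)
    (Finset.le_sup (Finset.mem_univ i))
  have := hy i j (by simpa using hj')
  rw [getElem_str] at this ⊢
  exact this

/-- Shrink a box around a point into an open set. -/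
lemma shrink_box {S : Set (Fin m → X)} (hS : IsOpen S) {z : Fin m → X} (hzS : z ∈ S)
    {B : Fin m → List Bool} (hzB : z ∈ box B) :
    ∃ B' : Fin m → List Bool, (∀ i, B i <+: B' i) ∧ z ∈ box B' ∧ box B' ⊆ S := by
  obtain ⟨N, hN⟩ := exists_box_str_subset hS hzS
  set N' := max N (Finset.univ.sup fun i => (B i).length) with hN'
  refine ⟨fun i => str (z i) N', fun i => prefix_str (hzB i) ?_, mem_box_str z N', ?_⟩
  · exact le_trans (Finset.le_sup (f := fun i => (B i).length) (Finset.mem_univ i))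
      (le_max_right _ _)
  · refine subset_trans (box_anti fun i => ?_) hN
    exact prefix_str (mem_cyl_str _ _) (by rw [length_str]; exact le_max_left _ _)

/-- Refine a box into a dense open set. -/
lemma refine_into_dense_open {D : Set (Fin m → X)} (hDo : IsOpen D) (hDd : Dense D)
    (B : Fin m → List Bool) :
    ∃ B' : Fin m → List Bool, (∀ i, B i <+: B' i) ∧ box B' ⊆ D := by
  obtain ⟨z, hzD, hzB⟩ := hDd.exists_mem_open (isOpen_box B) (box_nonempty B)
  obtain ⟨B', h1, _, h3⟩ := shrink_box hDo hzD hzB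
  exact ⟨B', h1, h3⟩

/-- Extend a string so that its cylinder avoids a given point. -/
lemma extend_avoid (u : List Bool) (y : X) :
    ∃ u', u <+: u' ∧ y ∉ cyl u' := by
  refine ⟨u ++ [!(y u.length)], ⟨_, rfl⟩, fun h => ?_⟩
  have := h u.length (by simp)
  simp at this

/-- The key avoidance refinement: given `F` continuous on a dense set `C`, shrink a box and
extend a target string so that `F` maps the (new) box ∩ `C` outside the (new) target
cylinder. -/
lemma refine_avoid {F : (Fin m → X) → X} {C : Set (Fin m → X)} (hCd : Dense C)
    (hF : ContinuousOn F C) (B : Fin m → List Bool) (u : List Bool) :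
    ∃ (B' : Fin m → List Bool) (u' : List Bool), (∀ i, B i <+: B' i) ∧ u <+: u' ∧
      ∀ z ∈ box B' ∩ C, F z ∉ cyl u' := by
  obtain ⟨z, hzC, hzB⟩ := hCd.exists_mem_open (isOpen_box B) (box_nonempty B)
  obtain ⟨u', huu', hyu'⟩ := extend_avoid u (F z)
  have hcw : ContinuousWithinAt F C z := hF z hzC
  have hmem : F ⁻¹' (cyl u')ᶜ ∈ 𝓝[C] z :=
    hcw.preimage_mem_nhdsWithin ((isClosed_cyl u').isOpen_compl.mem_nhds hyu')
  rw [mem_nhdsWithin] at hmem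
  obtain ⟨S, hSo, hzS, hsub⟩ := hmem
  obtain ⟨B', h1, h2, h3⟩ := shrink_box (hSo.inter (isOpen_box B)) ⟨hzS, hzB⟩ hzB
  exact ⟨B', u', h1, huu', fun w hw => hsub ⟨(h3 hw.1).1, hw.2⟩⟩

/-! ### Generic iterated refinement -/

lemma fold_refine {I : Type*} {Idx : Type*} [Fintype Idx]
    (Post : Idx → (I → List Bool) → Prop)
    (mono : ∀ τ (A A' : I → List Bool), (∀ s, A s <+: A' s) → Post τ A → Post τ A')
    (prog : ∀ τ (A : I → List Bool), ∃ A', (∀ s, A s <+: A' s) ∧ Post τ A')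
    (A : I → List Bool) :
    ∃ A', (∀ s, A s <+: A' s) ∧ ∀ τ, Post τ A' := by
  classical
  suffices h : ∀ (t : Finset Idx) (A : I → List Bool),
      ∃ A', (∀ s, A s <+: A' s) ∧ ∀ τ ∈ t, Post τ A' by
    obtain ⟨A', h1, h2⟩ := h Finset.univ A
    exact ⟨A', h1, fun τ => h2 τ (Finset.mem_univ τ)⟩
  intro t
  induction t using Finset.induction_on with
  | empty => exact fun A => ⟨A, fun s => List.prefix_refl _, by simp⟩
  | insert _ _ hτ ih =>
      intro A
      obtain ⟨A1, e1, h1⟩ := ih A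
      obtain ⟨A2, e2, h2⟩ := prog _ A1
      refine ⟨A2, fun s => (e1 s).trans (e2 s), ?_⟩
      intro τ' hτ'
      rcases Finset.mem_insert.1 hτ' with rfl | h
      · exact h2
      · exact mono _ _ _ e2 (h1 _ h)

/-! ### The stage refinement -/

section Engine

variable (F : (Fin m → Fin m) → (Fin m → X) → X)
variable (D : (Fin m → Fin m) → ℕ → Set (Fin m → X))

/-- All requirements handled at level `N`. -/
def PostAll (N : ℕ) (A : (Fin N → Bool) → List Bool) : Prop :=
  (∀ π, ∀ j ≤ N, ∀ s : Fin m → (Fin N → Bool), Function.Injective s →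
      box (fun i => A (s i)) ⊆ D π j) ∧
  (∀ π, ∀ s : Fin m → (Fin N → Bool), Function.Injective s → ∀ t₀, t₀ ∉ Set.range s →
      ∀ z ∈ box (fun i => A (s i)) ∩ ⋂ j, D π j, F π z ∉ cyl (A t₀))

variable (hDo : ∀ π j, IsOpen (D π j)) (hDd : ∀ π j, Dense (D π j))
variable (hCd : ∀ π, Dense (⋂ j, D π j))
variable (hFC : ∀ π, ContinuousOn (F π) (⋂ j, D π j))

/-- Update a string assignment on the range of an injective tuple. -/
noncomputable def updOn {N : ℕ} (A : (Fin N → Bool) → List Bool)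
    (s : Fin m → (Fin N → Bool)) (B' : Fin m → List Bool) : (Fin N → Bool) → List Bool :=
  fun v => if h : ∃ i, s i = v then B' h.choose else A v

lemma updOn_apply {N : ℕ} (A : (Fin N → Bool) → List Bool) {s : Fin m → (Fin N → Bool)}
    (hs : Function.Injective s) (B' : Fin m → List Bool) (i : Fin m) :
    updOn A s B' (s i) = B' i := by
  have h : ∃ i', s i' = s i := ⟨i, rfl⟩
  have : h.choose = i := hs h.choose_spec
  simp only [updOn, dif_pos h, this]

lemma updOn_apply_of_not_mem {N : ℕ} (A : (Fin N → Bool) → List Bool)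
    {s : Fin m → (Fin N → Bool)} (B' : Fin m → List Bool) {v : Fin N → Bool}
    (hv : v ∉ Set.range s) : updOn A s B' v = A v := by
  have h : ¬ ∃ i, s i = v := fun ⟨i, hi⟩ => hv ⟨i, hi⟩
  simp only [updOn, dif_neg h]

lemma updOn_prefix {N : ℕ} (A : (Fin N → Bool) → List Bool) {s : Fin m → (Fin N → Bool)}
    (hs : Function.Injective s) {B' : Fin m → List Bool}
    (hB' : ∀ i, A (s i) <+: B' i) (v : Fin N → Bool) : A v <+: updOn A s B' v := by
  by_cases h : ∃ i, s i = v
  · obtain ⟨i, rfl⟩ := h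
    rw [updOn_apply A hs]
    exact hB' i
  · rw [updOn_apply_of_not_mem A B' (fun ⟨i, hi⟩ => h ⟨i, hi⟩)]

include hDo hDd hCd hFC in
/-- The one-stage refinement lemma. -/
lemma stage_lemma (N : ℕ) (A : (Fin N → Bool) → List Bool) :
    ∃ A', (∀ v, A v <+: A' v) ∧ PostAll F D N A' := by
  classical
  set Idx := ((Fin m → Fin m) × Fin (N + 1) × (Fin m → (Fin N → Bool))) ⊕
      ((Fin m → Fin m) × (Fin m → (Fin N → Bool)) × (Fin N → Bool)) with hIdx
  set Post : Idx → ((Fin N → Bool) → List Bool) → Prop := fun τ A =>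
    match τ with
    | Sum.inl (π, j, s) => Function.Injective s → box (fun i => A (s i)) ⊆ D π (j : ℕ)
    | Sum.inr (π, s, t₀) => Function.Injective s → t₀ ∉ Set.range s →
        ∀ z ∈ box (fun i => A (s i)) ∩ ⋂ j, D π j, F π z ∉ cyl (A t₀)
    with hPost
  have mono : ∀ τ (A A' : (Fin N → Bool) → List Bool), (∀ v, A v <+: A' v) →
      Post τ A → Post τ A' := by
    rintro (⟨π, j, s⟩ | ⟨π, s, t₀⟩) A A' hext h
    · intro hs
      exact subset_trans (box_anti fun i => hext (s i)) (h hs)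
    · intro hs ht z hz hmem
      exact h hs ht z ⟨box_anti (fun i => hext (s i)) hz.1, hz.2⟩ (cyl_anti (hext t₀) hmem)
  have prog : ∀ τ (A : (Fin N → Bool) → List Bool),
      ∃ A', (∀ v, A v <+: A' v) ∧ Post τ A' := by
    rintro (⟨π, j, s⟩ | ⟨π, s, t₀⟩) A
    · by_cases hs : Function.Injective s
      · obtain ⟨B', hB', hbox⟩ := refine_into_dense_open (hDo π j) (hDd π j)
          (fun i => A (s i))
        refine ⟨updOn A s B', updOn_prefix A hs hB', fun _ => ?_⟩
        have : (fun i => updOn A s B' (s i)) = B' := funext fun i => updOn_apply A hs B' i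
        rw [this]
        exact hbox
      · exact ⟨A, fun v => List.prefix_refl _, fun h => absurd h hs⟩
    · by_cases hs : Function.Injective s
      · by_cases ht : t₀ ∉ Set.range s
        · obtain ⟨B', u', hB', hu', havoid⟩ := refine_avoid (hCd π) (hFC π)
            (fun i => A (s i)) (A t₀)
          set A1 := Function.update A t₀ u' with hA1
          have hA1B : ∀ i, A1 (s i) <+: B' i := by
            intro i
            have : A1 (s i) = A (s i) :=
              Function.update_of_ne (fun h => ht ⟨i, h⟩) u' A
            rw [this]; exact hB' i
          refine ⟨updOn A1 s B', ?_, ?_⟩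
          · intro v
            by_cases hv : ∃ i, s i = v
            · obtain ⟨i, rfl⟩ := hv
              rw [updOn_apply A1 hs B' i]
              exact hB' i
            · rw [updOn_apply_of_not_mem A1 B' (fun ⟨i, hi⟩ => hv ⟨i, hi⟩)]
              by_cases hv' : v = t₀
              · subst hv'
                rw [hA1, Function.update_self]
                exact hu'
              · rw [hA1, Function.update_of_ne hv']
          · intro _ _ z hz hmem
            have h1 : (fun i => updOn A1 s B' (s i)) = B' :=
              funext fun i => updOn_apply A1 hs B' i
            have h2 : updOn A1 s B' t₀ = u' := by
              rw [updOn_apply_of_not_mem A1 B' ht, hA1, Function.update_self]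
            rw [h1] at hz
            rw [h2] at hmem
            exact havoid z hz hmem
        · exact ⟨A, fun v => List.prefix_refl _, fun _ h => absurd h ht⟩
      · exact ⟨A, fun v => List.prefix_refl _, fun h => absurd h hs⟩
  obtain ⟨A', hext, hpost⟩ := fold_refine Post mono prog A
  refine ⟨A', hext, ?_, ?_⟩
  · intro π j hj s hs
    exact hpost (Sum.inl (π, ⟨j, Nat.lt_succ_of_le hj⟩, s)) hs
  · intro π s hs t₀ ht z hz
    exact hpost (Sum.inr (π, s, t₀)) hs ht z hz


variable (st : ∀ N (A : (Fin N → Bool) → List Bool),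
    ∃ A', (∀ v, A v <+: A' v) ∧ PostAll F D N A')

/-- The fusion tower of string assignments. -/
noncomputable def tower : ∀ N : ℕ, (Fin N → Bool) → List Bool
  | 0 => fun _ => []
  | (N + 1) => (st (N + 1)
      (fun v : Fin (N + 1) → Bool => tower N (Fin.init v) ++ [v (Fin.last N)])).choose

lemma tower_succ (N : ℕ) (v : Fin (N + 1) → Bool) :
    (tower F D st N (Fin.init v) ++ [v (Fin.last N)]) <+: tower F D st (N + 1) v := by
  rw [tower]
  exact (st (N + 1) (fun v : Fin (N + 1) → Bool =>
    tower F D st N (Fin.init v) ++ [v (Fin.last N)])).choose_spec.1 v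

lemma tower_post (N : ℕ) : PostAll F D (N + 1) (tower F D st (N + 1)) := by
  rw [tower]
  exact (st (N + 1) (fun v : Fin (N + 1) → Bool =>
    tower F D st N (Fin.init v) ++ [v (Fin.last N)])).choose_spec.2

/-- Restriction of a point to its first `N` coordinates. -/
def restr (x : X) (N : ℕ) : Fin N → Bool := fun i => x i

lemma restr_init (x : X) (N : ℕ) : Fin.init (restr x (N + 1)) = restr x N :=
  funext fun _ => rfl


/-- Separating finitely many distinct points at a finite level. -/
lemma exists_level (ξ : Fin m → X) (hξ : Function.Injective ξ) (w : X)
    (hw : ∀ i, w ≠ ξ i) (n : ℕ) :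
    ∃ L, n ≤ L ∧ Function.Injective (fun i => restr (ξ i) L) ∧
      restr w L ∉ Set.range (fun i => restr (ξ i) L) := by
  classical
  have hd : ∀ i i' : Fin m, i ≠ i' → ∃ d, ξ i d ≠ ξ i' d := by
    intro i i' h
    by_contra hc; push_neg at hc
    exact h (hξ (funext hc))
  have hd2 : ∀ i, ∃ d, w d ≠ ξ i d := by
    intro i
    by_contra hc; push_neg at hc
    exact hw i (funext hc)
  choose d2 hd2' using hd2
  set g : Fin m × Fin m → ℕ :=
    fun p => if h : p.1 = p.2 then 0 else Nat.find (hd p.1 p.2 h) + 1 with hg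
  set L := max n ((Finset.univ.sup g) ⊔ (Finset.univ.sup fun i => d2 i + 1)) with hL
  refine ⟨L, le_max_left _ _, ?_, ?_⟩
  · intro i i' h
    by_contra hii
    have hdlt : Nat.find (hd i i' hii) < L := by
      have : g (i, i') ≤ L :=
        le_trans (Finset.le_sup (Finset.mem_univ (i, i'))) (le_trans le_sup_left (le_max_right _ _))
      rw [hg] at this
      simp only [dif_neg hii] at this
      omega
    have := congrFun h (⟨Nat.find (hd i i' hii), hdlt⟩ : Fin L)
    exact Nat.find_spec (hd i i' hii) this
  · rintro ⟨i, hi⟩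
    have hdlt : d2 i < L := by
      have : d2 i + 1 ≤ L :=
        le_trans (Finset.le_sup (f := fun i => d2 i + 1) (Finset.mem_univ i))
          (le_trans le_sup_right (le_max_right _ _))
      omega
    have := congrFun hi (⟨d2 i, hdlt⟩ : Fin L)
    exact hd2' i (this.symm)

lemma tower_chain (x : X) : ∀ {N M : ℕ}, N ≤ M →
    tower F D st N (restr x N) <+: tower F D st M (restr x M) := by
  intro N M h
  induction M, h using Nat.le_induction with
  | base => exact List.prefix_refl _
  | succ M hNM ih =>
      refine ih.trans ?_
      have h2 := tower_succ F D st M (restr x (M + 1))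
      rw [restr_init] at h2
      exact (List.prefix_append _ _).trans h2

lemma tower_len : ∀ (N : ℕ) (v : Fin N → Bool), N ≤ (tower F D st N v).length := by
  intro N
  induction N with
  | zero => intro v; exact Nat.zero_le _
  | succ N ih =>
      intro v
      have h := (tower_succ F D st N v).length_le
      simp only [List.length_append, List.length_singleton] at h
      exact le_trans (Nat.succ_le_succ (ih (Fin.init v))) h

/-- The limit embedding of Cantor space determined by the tower. -/
noncomputable def lim (x : X) : X :=
  fun n => (tower F D st (n + 1) (restr x (n + 1))).getD n false

lemma lim_mem_cyl (x : X) (N : ℕ) :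
    lim F D st x ∈ cyl (tower F D st N (restr x N)) := by
  intro i hi
  have h1 := tower_chain F D st x (le_max_left N (i + 1))
  have h2 := tower_chain F D st x (le_max_right N (i + 1))
  have hi1 : i < (tower F D st (i + 1) (restr x (i + 1))).length :=
    lt_of_lt_of_le (Nat.lt_succ_self i) (tower_len F D st (i + 1) _)
  show (tower F D st (i + 1) (restr x (i + 1))).getD i false = _
  rw [List.getD_eq_getElem _ _ hi1, h2.getElem hi1, ← h1.getElem hi]

lemma lim_eq_of_lt {x : X} {N i : ℕ} (hi : i < N)
    (hlen : i < (tower F D st N (restr x N)).length) :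
    lim F D st x i = (tower F D st N (restr x N)).getD i false := by
  rw [List.getD_eq_getElem _ _ hlen]
  exact lim_mem_cyl F D st x N i hlen

lemma lim_split (x : X) (N : ℕ) :
    lim F D st x ((tower F D st N (restr x N)).length) = x N := by
  set u := tower F D st N (restr x N) with hu
  set p := u.length with hp
  have hpre : u ++ [x N] <+: tower F D st (N + 1) (restr x (N + 1)) := by
    have h := tower_succ F D st N (restr x (N + 1))
    rw [restr_init] at h
    exact h
  have hlt : p < (u ++ [x N]).length := by simp [hp]
  have hlt2 : p < (tower F D st (N + 1) (restr x (N + 1))).length :=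
    lt_of_lt_of_le hlt hpre.length_le
  have h1 := tower_chain F D st x (le_max_left (p + 1) (N + 1))
  have h2 := tower_chain F D st x (le_max_right (p + 1) (N + 1))
  have hp1 : p < (tower F D st (p + 1) (restr x (p + 1))).length :=
    lt_of_lt_of_le (Nat.lt_succ_self p) (tower_len F D st (p + 1) _)
  show (tower F D st (p + 1) (restr x (p + 1))).getD p false = x N
  rw [List.getD_eq_getElem _ _ hp1, h1.getElem hp1, ← h2.getElem hlt2,
    ← hpre.getElem hlt]
  exact List.getElem_concat_length (l := u) (a := x N) (i := p) rfl hlt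

lemma lim_injective : Function.Injective (lim F D st) := by
  intro x y h
  by_contra hxy
  have hex : ∃ n, x n ≠ y n := by
    by_contra hc; push_neg at hc; exact hxy (funext hc)
  set n := Nat.find hex with hn
  have hres : restr x n = restr y n := by
    funext i
    by_contra hne
    exact Nat.find_min hex i.2 hne
  have h1 := lim_split F D st x n
  have h2 := lim_split F D st y n
  rw [← hres] at h2
  rw [h] at h1
  exact Nat.find_spec hex (h1 ▸ h2 ▸ rfl)

lemma restr_continuous (N : ℕ) : Continuous (fun x : X => restr x N) :=
  continuous_pi fun i => continuous_apply (i : ℕ)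

lemma lim_continuous : Continuous (lim F D st) := by
  refine continuous_pi fun n => ?_
  have : (fun x => lim F D st x n) =
      (fun v : Fin (n + 1) → Bool => (tower F D st (n + 1) v).getD n false) ∘
        (fun x : X => restr x (n + 1)) := rfl
  rw [this]
  exact Continuous.comp continuous_of_discreteTopology (restr_continuous _)

include st in
/-- The engine: a nonempty perfect set avoiding all the functions `F π` on
injective tuples. -/
theorem engine :
    ∃ P : Set X, P.Nonempty ∧ Perfect P ∧ P.Infinite ∧
      ∀ π (z : Fin m → X), Function.Injective z → (∀ i, z i ∈ P) →
        ∀ b ∈ P, (∀ i, b ≠ z i) → F π z ≠ b := by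
  classical
  refine ⟨Set.range (lim F D st), Set.range_nonempty _, ⟨?_, ?_⟩,
    Set.infinite_range_of_injective (lim_injective F D st), ?_⟩
  · exact (isCompact_range (lim_continuous F D st)).isClosed
  · -- preperfect
    rintro y ⟨x, rfl⟩
    rw [accPt_iff_nhds]
    intro U hU
    obtain ⟨S, hSU, hSo, hxS⟩ := mem_nhds_iff.1 hU
    obtain ⟨N, hN⟩ := exists_str_subset hSo hxS
    set x' := Function.update x N (!(x N)) with hx'
    have hxx' : x' ≠ x := by
      intro h
      have := congrFun h N
      rw [hx', Function.update_self] at this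
      exact (Bool.not_ne_self (x N)) this
    have hres : restr x' N = restr x N := by
      funext i
      exact Function.update_of_ne (Nat.ne_of_lt i.2) _ x
    have hmem : lim F D st x' ∈ cyl (str (lim F D st x) N) := by
      intro i hi
      rw [getElem_str]
      have hi' : i < N := by simpa using hi
      have hlen : i < (tower F D st N (restr x N)).length :=
        lt_of_lt_of_le hi' (tower_len F D st N _)
      have e1 := lim_eq_of_lt F D st (x := x') (N := N) hi' (by rw [hres]; exact hlen)
      have e2 := lim_eq_of_lt F D st (x := x) (N := N) hi' hlen
      rw [hres] at e1
      rw [e1, e2]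
    refine ⟨lim F D st x', ⟨hSU (hN hmem), ⟨x', rfl⟩⟩, ?_⟩
    exact fun h => hxx' (lim_injective F D st h)
  · -- freeness
    intro π z hzinj hzP b hbP hbz hFz
    choose ξ hξ using hzP
    obtain ⟨w, hw⟩ := hbP
    have hξinj : Function.Injective ξ := by
      intro i i' h
      apply hzinj
      rw [← hξ i, ← hξ i', h]
    have hwξ : ∀ i, w ≠ ξ i := by
      intro i h
      exact hbz i (by rw [← hw, ← hξ i, h])
    -- Step A: z lies in all the dense sets
    have hzC : z ∈ ⋂ j, D π j := by
      rw [mem_iInter]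
      intro j
      obtain ⟨L, hL, hsinj, -⟩ := exists_level ξ hξinj w hwξ (j + 1)
      obtain ⟨K, rfl⟩ : ∃ K, L = K + 1 := ⟨L - 1, by omega⟩
      have post := (tower_post F D st K).1 π j (by omega) _ hsinj
      apply post
      intro i
      rw [← hξ i]
      exact lim_mem_cyl F D st (ξ i) (K + 1)
    -- Step B: the avoidance condition
    obtain ⟨L, hL, hsinj, hnot⟩ := exists_level ξ hξinj w hwξ 1
    obtain ⟨K, rfl⟩ : ∃ K, L = K + 1 := ⟨L - 1, by omega⟩
    have post := (tower_post F D st K).2 π _ hsinj (restr w (K + 1)) hnot z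
      ⟨fun i => by rw [← hξ i]; exact lim_mem_cyl F D st (ξ i) (K + 1), hzC⟩
    apply post
    rw [hFz, ← hw]
    exact lim_mem_cyl F D st w (K + 1)


end Engine


/-! ### Continuity on a comeager set -/

/-- Any measurable function into Cantor space is continuous on a countable intersection of
dense open sets. -/
lemma exists_dense_open_continuousOn {g : (Fin m → X) → X} (hg : Measurable g) :
    ∃ D : ℕ → Set (Fin m → X), (∀ j, IsOpen (D j)) ∧ (∀ j, Dense (D j)) ∧
      ContinuousOn g (⋂ j, D j) := by
  classical
  have hmeas : ∀ u : List Bool, MeasurableSet (g ⁻¹' cyl u) :=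
    fun u => hg (isOpen_cyl u).measurableSet
  choose U hUo hUe using fun u : List Bool => (hmeas u).residualEq_isOpen
  set M : Set (Fin m → X) := ⋃ u : List Bool, symmDiff (g ⁻¹' cyl u) (U u) with hM
  have hMc : Mᶜ ∈ residual (Fin m → X) := by
    rw [hM, Set.compl_iUnion]
    rw [countable_iInter_mem]
    intro u
    have h := Filter.eventuallyEq_set.1 (hUe u)
    refine Filter.mem_of_superset h ?_
    intro x hx
    simp only [Set.mem_compl_iff, Set.mem_symmDiff]
    simp only [Set.mem_setOf_eq] at hx
    tauto
  obtain ⟨t, htM, htGδ, htd⟩ := mem_residual.1 hMc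
  obtain ⟨T, hTo, hTc, rfl⟩ := htGδ
  set T' : Set (Set (Fin m → X)) := insert Set.univ T with hT'
  obtain ⟨Df, hDf⟩ := (hTc.insert Set.univ).exists_eq_range ⟨Set.univ, Set.mem_insert _ _⟩
  have hiInt : ⋂ j, Df j = ⋂₀ T' := by rw [hT', hDf, Set.sInter_range]
  have hsub : ⋂ j, Df j ⊆ Mᶜ := by
    rw [hiInt, hT', Set.sInter_insert]
    exact subset_trans Set.inter_subset_right htM
  have hmemT' : ∀ j, Df j ∈ T' := by
    intro j
    rw [hT', hDf]
    exact Set.mem_range_self j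
  refine ⟨Df, ?_, ?_, ?_⟩
  · intro j
    rcases hmemT' j with h | h
    · rw [h]; exact isOpen_univ
    · exact hTo _ h
  · intro j
    rcases hmemT' j with h | h
    · rw [h]; exact dense_univ
    · exact htd.mono (Set.sInter_subset_of_mem h)
  · rw [continuousOn_iff']
    intro V hV
    refine ⟨⋃ u ∈ {u : List Bool | cyl u ⊆ V}, U u,
      isOpen_biUnion fun u _ => hUo u, ?_⟩
    ext x
    constructor
    · rintro ⟨hxV, hxC⟩
      have hxM : x ∉ M := hsub hxC
      obtain ⟨N, hN⟩ := exists_str_subset hV hxV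
      have hxu : x ∈ g ⁻¹' cyl (str (g x) N) := mem_cyl_str (g x) N
      have hxU : x ∈ U (str (g x) N) := by
        by_contra hc
        exact hxM (Set.mem_iUnion.2 ⟨str (g x) N, Set.mem_symmDiff.2 (Or.inl ⟨hxu, hc⟩)⟩)
      exact ⟨Set.mem_biUnion hN hxU, hxC⟩
    · rintro ⟨hxU, hxC⟩
      have hxM : x ∉ M := hsub hxC
      obtain ⟨u, hu, hxu⟩ := Set.mem_iUnion₂.1 hxU
      have : x ∈ g ⁻¹' cyl u := by
        by_contra hc
        exact hxM (Set.mem_iUnion.2 ⟨u, Set.mem_symmDiff.2 (Or.inr ⟨hxu, hc⟩)⟩)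
      exact ⟨hu this, hxC⟩

end FreeSetProof

/-- Every Borel measurable function `f : (2^ω)^m → 2^ω` (with `m ≥ 1`) has a nonempty
perfect free subset. -/
theorem borel_function_has_perfect_free_subset
    (m : ℕ) (hm : 1 ≤ m)
    (f : (Fin m → (ℕ → Bool)) → (ℕ → Bool)) (hf : Measurable f) :
    ∃ P : Set (ℕ → Bool), P.Nonempty ∧ Perfect P ∧
      ∀ a : Fin m → (ℕ → Bool), (∀ i, a i ∈ P) →
        (∃ i, f a = a i) ∨ f a ∉ P := by
  classical
  set F : (Fin m → Fin m) → (Fin m → FreeSetProof.X) → FreeSetProof.X :=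
    fun π z => f (z ∘ π) with hF
  have hFm : ∀ π, Measurable (F π) := fun π =>
    hf.comp (measurable_pi_lambda _ fun i => measurable_pi_apply (π i))
  choose D hDo hDd hFC using fun π => FreeSetProof.exists_dense_open_continuousOn (hFm π)
  have hCd : ∀ π, Dense (⋂ j, D π j) := fun π =>
    dense_of_mem_residual (countable_iInter_mem.2 fun j =>
      residual_of_dense_open (hDo π j) (hDd π j))
  have st := FreeSetProof.stage_lemma F D hDo hDd hCd hFC
  obtain ⟨P, hPne, hPperf, hPinf, hfree⟩ := FreeSetProof.engine F D st
  refine ⟨P, hPne, hPperf, ?_⟩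
  intro a ha
  by_contra hcon
  push_neg at hcon
  obtain ⟨hne, hmem⟩ := hcon
  -- representatives of repeated values
  set filt : Fin m → Finset (Fin m) := fun i => Finset.univ.filter (fun j => a j = a i)
    with hfilt
  have hfne : ∀ i, (filt i).Nonempty := fun i => ⟨i, by simp [hfilt]⟩
  set rep : Fin m → Fin m := fun i => (filt i).min' (hfne i) with hrep
  have haRep : ∀ i, a (rep i) = a i := by
    intro i
    have := (filt i).min'_mem (hfne i)
    simp only [hfilt, Finset.mem_filter] at this
    exact this.2
  have hfiltEq : ∀ i i', a i = a i' → filt i = filt i' := by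
    intro i i' h
    ext j
    simp only [hfilt, Finset.mem_filter, h]
  have hrepEq : ∀ i i', a i = a i' → rep i = rep i' := by
    intro i i' h
    simp only [hrep]
    congr 1
    exact hfiltEq i i' h
  have hrepRep : ∀ i, rep (rep i) = rep i := fun i => hrepEq _ _ (haRep i)
  -- extra distinct elements of P
  have hbadfin : (Set.range a ∪ {f a}).Finite :=
    (Set.finite_range a).union (Set.finite_singleton _)
  have hPdiff : (P \ (Set.range a ∪ {f a})).Infinite := hPinf.diff hbadfin
  have : Infinite ↥(P \ (Set.range a ∪ {f a})) := hPdiff.to_subtype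
  set emb := Infinite.natEmbedding ↥(P \ (Set.range a ∪ {f a})) with hemb
  set extra : Fin m → FreeSetProof.X := fun i => (emb (i : ℕ)).1 with hextra
  have hextraMem : ∀ i, extra i ∈ P \ (Set.range a ∪ {f a}) := fun i => (emb (i : ℕ)).2
  have hextraInj : Function.Injective extra := by
    intro i i' h
    exact Fin.val_injective (emb.injective (Subtype.val_injective h))
  -- the injective tuple
  set z : Fin m → FreeSetProof.X := fun j => if rep j = j then a j else extra j with hz
  have hzrep : ∀ i, z (rep i) = a i := by
    intro i
    simp only [hz, if_pos (hrepRep i)]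
    exact haRep i
  have hcomp : z ∘ rep = a := funext hzrep
  have hzinj : Function.Injective z := by
    intro j j' h
    simp only [hz] at h
    by_cases h1 : rep j = j <;> by_cases h2 : rep j' = j' <;>
      simp only [h1, h2, if_pos, if_neg, if_true, if_false] at h
    · rw [← h1, ← h2]
      exact hrepEq _ _ h
    · exact absurd ((hextraMem j').2 (Or.inl ⟨j, h⟩)) (by simp)
    · exact absurd ((hextraMem j).2 (Or.inl ⟨j', h.symm⟩)) (by simp)
    · exact hextraInj h
  have hzP : ∀ j, z j ∈ P := by
    intro j
    simp only [hz]
    split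
    · exact ha j
    · exact (hextraMem j).1
  have hbz : ∀ j, f a ≠ z j := by
    intro j
    simp only [hz]
    split
    · exact hne j
    · intro h
      exact (hextraMem j).2 (Or.inr h.symm)
  have := hfree rep z hzinj hzP (f a) hmem hbz
  apply this
  show f (z ∘ rep) = f a
  rw [hcomp]
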